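/- Let α ∈ E. If there exist a nonzero integer n and an integer m such that σ_x^n(α) − α = m (the image of the integer m in E), then α = (m/n)·x + c for some c ∈ F. -/

import Mathlib

/-- `E`, an algebraic closure of the rational function field `F(x)`. -/
noncomputable abbrev Ebar (F : Type*) [Field F] : Type _ := AlgebraicClosure (RatFunc F)

/-- The element `x` of `F(x) ⊆ E`. -/
noncomputable abbrev Ebar.x (F : Type*) [Field F] : Ebar F :=
  algebraMap (RatFunc F) (Ebar F) RatFunc.X

/-- The embedding of a constant `a ∈ F` into `E`. -/
noncomputable abbrev Ebar.c (F : Type*) [Field F] (a : F) : Ebar F :=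
  algebraMap (RatFunc F) (Ebar F) (RatFunc.C a)

section Aux

lemma aux_mul_apply {E : Type*} [CommRing E] (f g : E ≃+* E) (y : E) : (f * g) y = f (g y) := rfl

lemma aux_fix_nat {E : Type*} [CommRing E] (σ : E ≃+* E) (y : E) (hy : σ y = y) :
    ∀ t : ℕ, (σ ^ t) y = y := by
  intro t
  induction t with
  | zero => rfl
  | succ t ih => rw [pow_succ, aux_mul_apply, hy, ih]

lemma aux_fix_zpow {E : Type*} [CommRing E] (σ : E ≃+* E) (y : E) (hy : σ y = y) :
    ∀ k : ℤ, (σ ^ k) y = y := by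
  have hinv : σ⁻¹ y = y := by
    have h := congrArg σ.symm hy
    rw [RingEquiv.symm_apply_apply] at h
    exact h.symm
  intro k
  cases k with
  | ofNat t => rw [Int.ofNat_eq_coe, zpow_natCast]; exact aux_fix_nat σ y hy t
  | negSucc t => rw [zpow_negSucc, ← inv_pow]; exact aux_fix_nat σ⁻¹ y hinv (t + 1)

lemma aux_shift_zpow {E : Type*} [CommRing E] (σ : E ≃+* E) (x1 : E) (hσ : σ x1 = x1 + 1) :
    ∀ k : ℤ, (σ ^ k) x1 = x1 + k := by
  have hinv : σ⁻¹ x1 = x1 - 1 := by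
    apply σ.injective
    show σ (σ.symm x1) = _
    rw [RingEquiv.apply_symm_apply, map_sub, hσ, map_one]
    ring
  intro k
  induction k using Int.induction_on with
  | zero => rw [zpow_zero]; show x1 = x1 + ((0 : ℤ) : E); simp
  | succ t ih =>
      rw [zpow_add_one, aux_mul_apply, hσ, map_add, ih, map_one]
      push_cast; ring
  | pred t ih =>
      rw [zpow_sub_one, aux_mul_apply, hinv, map_sub, ih, map_one]
      push_cast; ring

lemma aux_root_in_base {F E : Type*} [Field F] [IsAlgClosed F] [Field E]
    (f : F →+* E) (b : E) :
    ∀ (Nn : ℕ) (R : Polynomial F), R.natDegree ≤ Nn → R ≠ 0 →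
      Polynomial.eval₂ f b R = 0 → ∃ c : F, b = f c := by
  intro Nn
  induction Nn with
  | zero =>
    intro R hdeg hR h0
    exfalso
    have h1 : R = Polynomial.C (R.coeff 0) :=
      Polynomial.eq_C_of_natDegree_eq_zero (Nat.le_zero.mp hdeg)
    rw [h1, Polynomial.eval₂_C] at h0
    have hc : R.coeff 0 ≠ 0 := fun hcc => hR (by rw [h1, hcc, map_zero])
    exact hc (f.injective (by rw [h0, map_zero]))
  | succ Nn ih =>
    intro R hdeg hR h0
    by_cases hd : R.natDegree = 0
    · exfalso
      have h1 : R = Polynomial.C (R.coeff 0) := Polynomial.eq_C_of_natDegree_eq_zero hd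
      rw [h1, Polynomial.eval₂_C] at h0
      have hc : R.coeff 0 ≠ 0 := fun hcc => hR (by rw [h1, hcc, map_zero])
      exact hc (f.injective (by rw [h0, map_zero]))
    · have hdeg' : R.degree ≠ 0 := fun hcon =>
        hd (Polynomial.natDegree_eq_zero_iff_degree_le_zero.mpr hcon.le)
      obtain ⟨r, hr⟩ := IsAlgClosed.exists_root R hdeg'
      obtain ⟨R', hfac⟩ := Polynomial.dvd_iff_isRoot.mpr hr
      have hR' : R' ≠ 0 := by
        intro h0'
        exact hR (by rw [hfac, h0', mul_zero])
      rw [hfac, Polynomial.eval₂_mul, Polynomial.eval₂_sub, Polynomial.eval₂_X,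
        Polynomial.eval₂_C] at h0
      rcases mul_eq_zero.mp h0 with h1 | h2
      · exact ⟨r, sub_eq_zero.mp h1⟩
      · refine ih R' ?_ hR' h2
        have hnd : R.natDegree = 1 + R'.natDegree := by
          rw [hfac, Polynomial.natDegree_mul (Polynomial.X_sub_C_ne_zero r) hR',
            Polynomial.natDegree_X_sub_C]
        omega

end Aux

/-- Let `F` be an algebraically closed field of characteristic zero, `E` the algebraic
closure of `F(x)`, and `σ_x` an automorphism of `E` fixing `F` with `σ_x(x) = x + 1`.
If `α ∈ E` satisfies `σ_x^n(α) - α = m` for some nonzero integer `n` and some integer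
`m`, then `α = (m/n)·x + c` for some `c ∈ F`. -/
theorem integer_linear_of_shift_difference_int
    (F : Type*) [Field F] [IsAlgClosed F] [CharZero F]
    (σx : Ebar F ≃+* Ebar F)
    (hσxF : ∀ a : F, σx (Ebar.c F a) = Ebar.c F a)
    (hσxx : σx (Ebar.x F) = Ebar.x F + 1)
    (α : Ebar F) (n : ℤ) (hn : n ≠ 0) (m : ℤ)
    (h : (σx ^ n) α - α = (m : Ebar F)) :
    ∃ c : F, α = ((m : Ebar F) / (n : Ebar F)) * Ebar.x F + Ebar.c F c := by
  classical
  haveI : CharZero (RatFunc F) :=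
    charZero_of_injective_algebraMap (algebraMap F (RatFunc F)).injective
  haveI : CharZero (Ebar F) :=
    charZero_of_injective_algebraMap (algebraMap (RatFunc F) (Ebar F)).injective
  set φ : RatFunc F →+* Ebar F := algebraMap (RatFunc F) (Ebar F) with hφ
  set ψ : Polynomial F →+* RatFunc F := algebraMap (Polynomial F) (RatFunc F) with hψdef
  set algF : F →+* Ebar F := φ.comp (algebraMap F (RatFunc F)) with halgF
  have hcF : ∀ a : F, algF a = Ebar.c F a := fun a => rfl
  -- the shift and fixed-points of powers of σx
  have hx : ∀ k : ℤ, (σx ^ k) (Ebar.x F) = Ebar.x F + k := aux_shift_zpow σx _ hσxx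
  have hfix : ∀ (k : ℤ) (a : F), (σx ^ k) (Ebar.c F a) = Ebar.c F a :=
    fun k a => aux_fix_zpow σx _ (hσxF a) k
  set σ : Ebar F ≃+* Ebar F := σx ^ n with hσdef
  have hσk : ∀ (k : ℕ) (a : F), (σ ^ k) (algF a) = algF a := by
    intro k a
    rw [hσdef, ← zpow_natCast, ← zpow_mul]
    exact hfix _ a
  have hσxk : ∀ k : ℕ, (σ ^ k) (Ebar.x F) = Ebar.x F + ((n * k : ℤ) : Ebar F) := by
    intro k
    rw [hσdef, ← zpow_natCast, ← zpow_mul]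
    exact hx _
  -- basic setup
  have hne : (n : Ebar F) ≠ 0 := Int.cast_ne_zero.mpr hn
  set γ : Ebar F := (m : Ebar F) / (n : Ebar F) with hγ
  have hσα : σ α = α + m := by
    have h2 := sub_eq_iff_eq_add.mp h
    rw [h2]; ring
  set β : Ebar F := α - γ * Ebar.x F with hβdef
  have hσβ : σ β = β := by
    have hσx' : σ (Ebar.x F) = Ebar.x F + (n : Ebar F) := by
      rw [hσdef]; exact hx n
    have hσγ : σ γ = γ := by rw [hγ, map_div₀, map_intCast, map_intCast]
    have hγn : γ * (n : Ebar F) = (m : Ebar F) := div_mul_cancel₀ _ hne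
    rw [hβdef, map_sub, map_mul, hσα, hσγ, hσx']
    linear_combination -hγn
  have hσkβ : ∀ k : ℕ, (σ ^ k) β = β := aux_fix_nat σ β hσβ
  -- β is algebraic over F(x)
  obtain ⟨p, hp0, hpβ⟩ := (Algebra.IsAlgebraic.isAlgebraic (R := RatFunc F) β)
  set N := p.natDegree with hN
  -- clear denominators
  obtain ⟨d, hd⟩ := IsLocalization.exist_integer_multiples
    (nonZeroDivisors (Polynomial F)) (Finset.range (N + 1)) p.coeff
  have hq' : ∀ j : ℕ, ∃ qj : Polynomial F, ψ qj = (d : Polynomial F) • p.coeff j := by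
    intro j
    by_cases hj : j ∈ Finset.range (N + 1)
    · exact hd j hj
    · refine ⟨0, ?_⟩
      have : p.coeff j = 0 := p.coeff_eq_zero_of_natDegree_lt (by
        simp only [Finset.mem_range] at hj; omega)
      rw [this, map_zero, smul_zero]
  choose q hq using hq'
  -- relate ψ and eval₂ at x
  have hψx : ∀ r : Polynomial F, φ (ψ r) = Polynomial.eval₂ algF (Ebar.x F) r := by
    have hhom : φ.comp ψ = Polynomial.eval₂RingHom algF (Ebar.x F) := by
      apply Polynomial.ringHom_ext
      · intro a
        simp only [RingHom.comp_apply, Polynomial.coe_eval₂RingHom, Polynomial.eval₂_C]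
        rw [hψdef, RatFunc.algebraMap_C]
        rfl
      · simp only [RingHom.comp_apply, Polynomial.coe_eval₂RingHom, Polynomial.eval₂_X]
        rw [hψdef, RatFunc.algebraMap_X]
    intro r
    have := RingHom.congr_fun hhom r
    simp only [RingHom.comp_apply] at this ⊢; exact this
  -- the two-variable polynomial, specialized over E in the variable x
  set S : Polynomial (Ebar F) :=
    ∑ j ∈ Finset.range (N + 1), (q j).map algF * Polynomial.C (β ^ j) with hSdef
  have hS0 : S.eval (Ebar.x F) = 0 := by
    have hcalc : S.eval (Ebar.x F) = φ (ψ (d : Polynomial F)) * (Polynomial.aeval β) p := by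
      rw [Polynomial.aeval_eq_sum_range, ← hN, Finset.mul_sum, hSdef,
        Polynomial.eval_finset_sum]
      apply Finset.sum_congr rfl
      intro j _
      rw [Polynomial.eval_mul, Polynomial.eval_C, Polynomial.eval_map, ← hψx, hq j,
        Algebra.smul_def, map_mul, Algebra.smul_def]
      ring
    rw [hcalc, hpβ, mul_zero]
  have hSroots : ∀ k : ℕ, S.eval (Ebar.x F + ((n * k : ℤ) : Ebar F)) = 0 := by
    intro k
    have hmap : S.map ((σ ^ k : Ebar F ≃+* Ebar F) : Ebar F →+* Ebar F) = S := by
      rw [hSdef, Polynomial.map_sum]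
      apply Finset.sum_congr rfl
      intro j _
      rw [Polynomial.map_mul, Polynomial.map_map, Polynomial.map_C]
      congr 1
      · congr 1
        ext a
        exact hσk k a
      · rw [map_pow]
        exact congrArg Polynomial.C (congrArg (· ^ j) (hσkβ k))
    calc S.eval (Ebar.x F + ((n * k : ℤ) : Ebar F))
        = S.eval ((σ ^ k) (Ebar.x F)) := by rw [hσxk k]
      _ = (S.map ((σ ^ k : Ebar F ≃+* Ebar F) : Ebar F →+* Ebar F)).eval ((σ ^ k) (Ebar.x F)) := by rw [hmap]
      _ = Polynomial.eval₂ ((σ ^ k : Ebar F ≃+* Ebar F) : Ebar F →+* Ebar F)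
            (((σ ^ k : Ebar F ≃+* Ebar F) : Ebar F →+* Ebar F) (Ebar.x F)) S := by rw [Polynomial.eval_map]; rfl
      _ = ((σ ^ k : Ebar F ≃+* Ebar F) : Ebar F →+* Ebar F) (S.eval (Ebar.x F)) := Polynomial.eval₂_at_apply _ _
      _ = 0 := by rw [hS0, map_zero]
  -- S must vanish identically
  have hS : S = 0 := by
    by_contra hS
    have hfin := Polynomial.finite_setOf_isRoot hS
    have hinj : Function.Injective (fun k : ℕ => Ebar.x F + ((n * k : ℤ) : Ebar F)) := by
      intro k k' hkk
      simp only [add_right_inj] at hkk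
      have := Int.cast_injective (α := Ebar F) hkk
      have := mul_left_cancel₀ hn this
      exact_mod_cast this
    have hmem : ∀ k : ℕ, (fun k : ℕ => Ebar.x F + ((n * k : ℤ) : Ebar F)) k ∈
        {y | S.IsRoot y} := fun k => hSroots k
    exact Set.infinite_of_injective_forall_mem hinj hmem hfin
  -- extract a nonzero polynomial over F with root β
  have hd0 : (d : Polynomial F) ≠ 0 := nonZeroDivisors.coe_ne_zero d
  have hqN : q N ≠ 0 := by
    intro h0
    have hh := hq N
    rw [h0, map_zero] at hh
    have hcoeffN : p.coeff N ≠ 0 := by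
      rw [hN]
      exact Polynomial.leadingCoeff_ne_zero.mpr hp0
    have : (d : Polynomial F) • p.coeff N ≠ 0 := by
      rw [Algebra.smul_def]
      exact mul_ne_zero
        ((map_ne_zero_iff ψ (IsFractionRing.injective (Polynomial F) (RatFunc F))).mpr hd0)
        hcoeffN
    exact this hh.symm
  set i := (q N).natDegree with hi
  have hSi : S.coeff i = 0 := by rw [hS, Polynomial.coeff_zero]
  have hcoeffS : S.coeff i = ∑ j ∈ Finset.range (N + 1), algF ((q j).coeff i) * β ^ j := by
    rw [hSdef, Polynomial.finset_sum_coeff]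
    apply Finset.sum_congr rfl
    intro j _
    rw [Polynomial.coeff_mul_C, Polynomial.coeff_map]
  set R : Polynomial F :=
    ∑ j ∈ Finset.range (N + 1), Polynomial.C ((q j).coeff i) * Polynomial.X ^ j with hRdef
  have hRN : R.coeff N = (q N).coeff i := by
    rw [hRdef, Polynomial.finset_sum_coeff]
    rw [Finset.sum_eq_single N]
    · rw [Polynomial.coeff_C_mul, Polynomial.coeff_X_pow, if_pos rfl, mul_one]
    · intro j _ hjN
      rw [Polynomial.coeff_C_mul, Polynomial.coeff_X_pow, if_neg (fun hh => hjN hh.symm),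
        mul_zero]
    · intro hN'
      exact absurd (Finset.self_mem_range_succ N) hN'
  have hR0 : R ≠ 0 := by
    intro h0
    rw [h0, Polynomial.coeff_zero] at hRN
    exact (Polynomial.leadingCoeff_ne_zero.mpr hqN) hRN.symm
  have hRβ : Polynomial.eval₂ algF β R = 0 := by
    rw [hRdef, Polynomial.eval₂_finset_sum, ← hSi, hcoeffS]
    apply Finset.sum_congr rfl
    intro j _
    rw [Polynomial.eval₂_mul, Polynomial.eval₂_C, Polynomial.eval₂_pow, Polynomial.eval₂_X]
  obtain ⟨c, hc⟩ := aux_root_in_base algF β R.natDegree R le_rfl hR0 hRβ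
  refine ⟨c, ?_⟩
  have hfin : α - γ * Ebar.x F = Ebar.c F c := by rw [← hβdef, hc, hcF]
  linear_combination hfin
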